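/- Under the exact-power tail condition with β_x := ρ_x − (p+1), for every integer k ≥ 1 the moments of the FDH estimation error satisfy E[{φ(x) − φ̂_1(x)}^k] = k(β_x + p + 1)^{-1}(nℓ_x)^{-k/(β_x+p+1)} Γ(k(β_x + p + 1)^{-1}) + o(n^{-k/(β_x+p+1)}) as n → ∞, where Γ is the gamma function. -/

import Mathlib

open MeasureTheory ProbabilityTheory Filter Set Asymptotics Topology

noncomputable section

namespace FrontierEV

variable {Ω : Type*} [MeasureSpace Ω] {p : ℕ}

/-- Joint distribution function `F(x,y) = P(X ≤ x, Y ≤ y)` of the pair `(X 0, Y 0)`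
(inequalities on `Fin p → ℝ` are componentwise). -/
def jointF (X : ℕ → Ω → (Fin p → ℝ)) (Y : ℕ → Ω → ℝ) (x : Fin p → ℝ) (y : ℝ) : ℝ :=
  (ℙ {ω | X 0 ω ≤ x ∧ Y 0 ω ≤ y}).toReal

/-- Marginal distribution function `F_X(x) = P(X ≤ x)`. -/
def margF (X : ℕ → Ω → (Fin p → ℝ)) (x : Fin p → ℝ) : ℝ :=
  (ℙ {ω | X 0 ω ≤ x}).toReal

/-- Conditional distribution function `F(y|x) = F(x,y)/F_X(x)` of `Y` given `X ≤ x`. -/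
def condF (X : ℕ → Ω → (Fin p → ℝ)) (Y : ℕ → Ω → ℝ) (x : Fin p → ℝ) (y : ℝ) : ℝ :=
  jointF X Y x y / margF X x

/-- The frontier function `φ(x) = sup {y ≥ 0 : F(y|x) < 1}`. -/
def phi (X : ℕ → Ω → (Fin p → ℝ)) (Y : ℕ → Ω → ℝ) (x : Fin p → ℝ) : ℝ :=
  sSup {y : ℝ | 0 ≤ y ∧ condF X Y x y < 1}

/-- The conditional quantile `φ_α(x) = inf {y ≥ 0 : F(y|x) ≥ α}`. -/
def condQ (X : ℕ → Ω → (Fin p → ℝ)) (Y : ℕ → Ω → ℝ) (α : ℝ) (x : Fin p → ℝ) : ℝ :=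
  sInf {y : ℝ | 0 ≤ y ∧ α ≤ condF X Y x y}

open Classical in
/-- Empirical joint distribution function. -/
def empJointF (X : ℕ → Ω → (Fin p → ℝ)) (Y : ℕ → Ω → ℝ) (n : ℕ) (x : Fin p → ℝ) (y : ℝ)
    (ω : Ω) : ℝ :=
  (∑ i ∈ Finset.range n, if X i ω ≤ x ∧ Y i ω ≤ y then (1 : ℝ) else 0) / n

open Classical in
/-- Empirical marginal distribution function. -/
def empMargF (X : ℕ → Ω → (Fin p → ℝ)) (n : ℕ) (x : Fin p → ℝ) (ω : Ω) : ℝ :=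
  (∑ i ∈ Finset.range n, if X i ω ≤ x then (1 : ℝ) else 0) / n

/-- Empirical conditional distribution function. -/
def empCondF (X : ℕ → Ω → (Fin p → ℝ)) (Y : ℕ → Ω → ℝ) (n : ℕ) (x : Fin p → ℝ) (y : ℝ)
    (ω : Ω) : ℝ :=
  empJointF X Y n x y ω / empMargF X n x ω

/-- Empirical conditional quantile `φ̂_α(x)`. -/
def empCondQ (X : ℕ → Ω → (Fin p → ℝ)) (Y : ℕ → Ω → ℝ) (n : ℕ) (α : ℝ) (x : Fin p → ℝ)
    (ω : Ω) : ℝ :=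
  sInf {y : ℝ | 0 ≤ y ∧ α ≤ empCondF X Y n x y ω}

/-- The FDH estimator `φ̂_1(x) = max {Y_i : X_i ≤ x, i < n}`. -/
def fdh (X : ℕ → Ω → (Fin p → ℝ)) (Y : ℕ → Ω → ℝ) (n : ℕ) (x : Fin p → ℝ) (ω : Ω) : ℝ :=
  sSup {y : ℝ | ∃ i < n, X i ω ≤ x ∧ Y i ω = y}

/-- The data `(X_i, Y_i)` are i.i.d. copies of `(X 0, Y 0)`. -/
def IID (X : ℕ → Ω → (Fin p → ℝ)) (Y : ℕ → Ω → ℝ) : Prop :=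
  (∀ i, Measurable fun ω => (X i ω, Y i ω)) ∧
  iIndepFun (m := fun _ => inferInstance) (fun i ω => (X i ω, Y i ω)) ℙ ∧
  ∀ i, IdentDistrib (fun ω => (X i ω, Y i ω)) (fun ω => (X 0 ω, Y 0 ω)) ℙ ℙ

/-- `G` is a distribution function. -/
def IsCDF (G : ℝ → ℝ) : Prop :=
  Monotone G ∧ (∀ y, ContinuousWithinAt G (Ici y) y) ∧
    Tendsto G atBot (𝓝 0) ∧ Tendsto G atTop (𝓝 1)

/-- A distribution function is non-degenerate if it is not the distribution function of a
point mass. -/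
def NonDegenerate (G : ℝ → ℝ) : Prop :=
  ∃ y, 0 < G y ∧ G y < 1

/-- Convergence in distribution of real random variables towards the distribution
function `G`: convergence of the distribution functions at every continuity point of `G`. -/
def TendstoInDist (W : ℕ → Ω → ℝ) (G : ℝ → ℝ) : Prop :=
  ∀ y : ℝ, ContinuousAt G y →
    Tendsto (fun n => (ℙ {ω | W n ω ≤ y}).toReal) atTop (𝓝 (G y))

/-- The extreme-value Weibull distribution function `Ψ_ρ(y) = exp(-(-y)^ρ)` for `y ≤ 0`,
`= 1` for `y > 0`. -/
def PsiEV (ρ y : ℝ) : ℝ :=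
  if y ≤ 0 then Real.exp (-((-y) ^ ρ)) else 1

/-- The `Weibull(1,ρ)` distribution function: `W^ρ` is exponential with parameter 1. -/
def weibullCDF (ρ y : ℝ) : ℝ :=
  if 0 ≤ y then 1 - Real.exp (-(y ^ ρ)) else 0

/-- The distribution function of a centered normal distribution with variance `v`. -/
def normalCDF (v y : ℝ) : ℝ :=
  ((gaussianReal 0 (Real.toNNReal v)) (Iic y)).toReal

/-- Condition (2.2): `1 - F(φ(x) - 1/t | x)` is regularly varying with exponent `-ρ`. -/
def Cond22 (X : ℕ → Ω → (Fin p → ℝ)) (Y : ℕ → Ω → ℝ) (x : Fin p → ℝ) (ρ : ℝ) : Prop :=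
  ∀ z > 0, Tendsto
    (fun t => (1 - condF X Y x (phi X Y x - 1 / (t * z))) /
      (1 - condF X Y x (phi X Y x - 1 / t)))
    atTop (𝓝 (z ^ (-ρ)))

/-- Regular variation at infinity with index `τ`. -/
def RegVary (h : ℝ → ℝ) (τ : ℝ) : Prop :=
  ∀ z > 0, Tendsto (fun t => h (t * z) / h t) atTop (𝓝 (z ^ τ))

/-- Generalized inverse of a function `g : ℝ → ℝ`. -/
def genInv (g : ℝ → ℝ) (y : ℝ) : ℝ :=
  sInf {t : ℝ | y ≤ g t}

/-- Exact-power tail condition: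
`F_X(x)[1 - F(y|x)] = ℓ (φ(x) - y)^ρ` for all `y < φ(x)` close enough to `φ(x)`. -/
def ExactPowerTail (X : ℕ → Ω → (Fin p → ℝ)) (Y : ℕ → Ω → ℝ) (x : Fin p → ℝ)
    (ℓ ρ : ℝ) : Prop :=
  ∃ y₀ < phi X Y x, ∀ y, y₀ ≤ y → y < phi X Y x →
    margF X x * (1 - condF X Y x y) = ℓ * (phi X Y x - y) ^ ρ

/-- The function `U(t) = φ_{1 - 1/(t F_X(x))}(x)`. -/
def Ufun (X : ℕ → Ω → (Fin p → ℝ)) (Y : ℕ → Ω → ℝ) (x : Fin p → ℝ) (t : ℝ) : ℝ :=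
  condQ X Y (1 - 1 / (t * margF X x)) x

/-- The Pickands-type estimator `ρ̂_x` with threshold `k`. -/
def pickands (X : ℕ → Ω → (Fin p → ℝ)) (Y : ℕ → Ω → ℝ) (n k : ℕ) (x : Fin p → ℝ)
    (ω : Ω) : ℝ :=
  Real.log 2 / Real.log
    ((empCondQ X Y n (1 - (2 * (k : ℝ) - 1) / ((n : ℝ) * empMargF X n x ω)) x ω -
        empCondQ X Y n (1 - (4 * (k : ℝ) - 1) / ((n : ℝ) * empMargF X n x ω)) x ω) /
      (empCondQ X Y n (1 - ((k : ℝ) - 1) / ((n : ℝ) * empMargF X n x ω)) x ω -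
        empCondQ X Y n (1 - (2 * (k : ℝ) - 1) / ((n : ℝ) * empMargF X n x ω)) x ω))

/-- The statistic `M^{(j)}_n`. -/
def Mstat (X : ℕ → Ω → (Fin p → ℝ)) (Y : ℕ → Ω → ℝ) (n k j : ℕ) (x : Fin p → ℝ)
    (ω : Ω) : ℝ :=
  (∑ i ∈ Finset.range k,
      (Real.log (empCondQ X Y n (1 - (i : ℝ) / ((n : ℝ) * empMargF X n x ω)) x ω) -
        Real.log (empCondQ X Y n (1 - (k : ℝ) / ((n : ℝ) * empMargF X n x ω)) x ω)) ^ j) / k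

/-- The moment-type estimator `ρ̃_x` with threshold `k`. -/
def momentEst (X : ℕ → Ω → (Fin p → ℝ)) (Y : ℕ → Ω → ℝ) (n k : ℕ) (x : Fin p → ℝ)
    (ω : Ω) : ℝ :=
  -(Mstat X Y n k 1 x ω + 1 -
      (1 / 2) * (1 - (Mstat X Y n k 1 x ω) ^ 2 / Mstat X Y n k 2 x ω)⁻¹)⁻¹


section AnalysisAux

/-- `(1-a)^n ≤ exp (-(n*a))` for `a ≤ 1`. -/
lemma one_sub_pow_le_exp {a : ℝ} (ha : a ≤ 1) (n : ℕ) :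
    (1 - a) ^ n ≤ Real.exp (-(n * a)) := by
  have h1 : 1 - a ≤ Real.exp (-a) := by
    have := Real.add_one_le_exp (-a); linarith
  calc (1 - a) ^ n ≤ (Real.exp (-a)) ^ n := pow_le_pow_left₀ (by linarith) h1 n
    _ = Real.exp (-(n * a)) := by rw [← Real.exp_nat_mul]; ring_nf

lemma aux_integrableOn {s c ρ : ℝ} (hs : -1 < s) (hρ : 0 < ρ)
    (hc : 0 < c) :
    MeasureTheory.IntegrableOn (fun u : ℝ => u ^ s * Real.exp (-(c * u ^ ρ))) (Set.Ioi 0) := by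
  set e : ℝ := (s + 1) / ρ - 1 with he
  have hpos : 0 < (s + 1) / ρ := div_pos (by linarith) hρ
  have h1 : IntegrableOn (fun y : ℝ => Real.exp (-y) * y ^ e) (Ioi 0) :=
    Real.GammaIntegral_convergent hpos
  have h2 : IntegrableOn (fun y : ℝ => Real.exp (-(c * y)) * (c * y) ^ e) (Ioi 0) := by
    have := (integrableOn_Ioi_comp_mul_left_iff (fun y : ℝ => Real.exp (-y) * y ^ e) 0 hc).mpr
      (by rw [mul_zero]; exact h1)
    exact this
  have h3 : IntegrableOn (fun y : ℝ => Real.exp (-(c * y)) * y ^ e) (Ioi 0) := by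
    have h4 : IntegrableOn (fun y : ℝ => c ^ (-e) * (Real.exp (-(c * y)) * (c * y) ^ e))
        (Ioi 0) := h2.const_mul _
    refine h4.congr_fun (fun y hy => ?_) measurableSet_Ioi
    · have hy0 : (0:ℝ) < y := hy
      beta_reduce
      rw [Real.mul_rpow hc.le hy0.le]
      rw [show c ^ (-e) * (Real.exp (-(c * y)) * (c ^ e * y ^ e))
          = (c ^ (-e) * c ^ e) * (Real.exp (-(c * y)) * y ^ e) by ring,
        ← Real.rpow_add hc, neg_add_cancel, Real.rpow_zero, one_mul]
  have h5 := (integrableOn_Ioi_comp_rpow_iff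
      (fun y : ℝ => Real.exp (-(c * y)) * y ^ e) (p := ρ) hρ.ne').mpr h3
  have h5' : IntegrableOn
      (fun x : ℝ => ρ⁻¹ * ((|ρ| * x ^ (ρ - 1)) • (Real.exp (-(c * x ^ ρ)) * (x ^ ρ) ^ e)))
      (Ioi 0) := h5.const_mul _
  refine h5'.congr_fun (fun u hu => ?_) measurableSet_Ioi
  · have hu0 : (0:ℝ) < u := hu
    have h7 : (u ^ ρ) ^ e = u ^ (ρ * e) := (Real.rpow_mul hu0.le ρ e).symm
    simp only [smul_eq_mul]
    rw [h7, abs_of_pos hρ]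
    rw [show ρ⁻¹ * (ρ * u ^ (ρ - 1) * (Real.exp (-(c * u ^ ρ)) * u ^ (ρ * e)))
        = (ρ⁻¹ * ρ) * ((u ^ (ρ - 1) * u ^ (ρ * e)) * Real.exp (-(c * u ^ ρ))) by ring,
      inv_mul_cancel₀ hρ.ne', one_mul, ← Real.rpow_add hu0]
    have : ρ - 1 + ρ * e = s := by rw [he]; field_simp; ring
    rw [this]

lemma aux_integral_value {s c ρ : ℝ} (hs : -1 < s) (hρ : 0 < ρ) (hc : 0 < c) :
    ∫ u in Ioi (0:ℝ), u ^ s * Real.exp (-(c * u ^ ρ))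
      = c ^ (-(s + 1) / ρ) * (1 / ρ) * Real.Gamma ((s + 1) / ρ) := by
  rw [← integral_rpow_mul_exp_neg_mul_rpow hρ hs hc]
  refine setIntegral_congr_fun measurableSet_Ioi (fun u hu => ?_)
  rw [neg_mul]


lemma measurable_rpow_const (c : ℝ) : Measurable fun u : ℝ => u ^ c := by
  measurability

end AnalysisAux


section MyAux

variable {Ω : Type*} [MeasureSpace Ω] {p : ℕ}

lemma fdh_set_finite (X : ℕ → Ω → (Fin p → ℝ)) (Y : ℕ → Ω → ℝ) (n : ℕ) (x : Fin p → ℝ)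
    (ω : Ω) : {y : ℝ | ∃ i < n, X i ω ≤ x ∧ Y i ω = y}.Finite := by
  apply Set.Finite.subset ((Set.finite_Iio n).image (fun i => Y i ω))
  rintro y ⟨i, hi, -, rfl⟩
  exact ⟨i, hi, rfl⟩

lemma fdh_le_iff (X : ℕ → Ω → (Fin p → ℝ)) (Y : ℕ → Ω → ℝ) (n : ℕ) (x : Fin p → ℝ)
    (ω : Ω) {c : ℝ} (hc : 0 ≤ c) :
    fdh X Y n x ω ≤ c ↔ ∀ i < n, ¬(X i ω ≤ x ∧ c < Y i ω) := by
  constructor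
  · rintro h i hi ⟨hX, hY⟩
    have hmem : Y i ω ∈ {y : ℝ | ∃ i < n, X i ω ≤ x ∧ Y i ω = y} := ⟨i, hi, hX, rfl⟩
    have := le_csSup (fdh_set_finite X Y n x ω).bddAbove hmem
    exact absurd ((this.trans h)) (not_le.mpr hY)
  · intro h
    apply Real.sSup_le _ hc
    rintro y ⟨i, hi, hX, rfl⟩
    by_contra hlt
    exact h i hi ⟨hX, not_le.mp hlt⟩

open Classical in
/-- A measurable version of the FDH estimator. -/
def fdhAux (X : ℕ → Ω → (Fin p → ℝ)) (Y : ℕ → Ω → ℝ) (x : Fin p → ℝ) : ℕ → Ω → ℝ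
  | 0 => fun _ => 0
  | n + 1 => fun ω => max (fdhAux X Y x n ω) (if X n ω ≤ x then Y n ω else 0)

lemma fdhAux_nonneg (X : ℕ → Ω → (Fin p → ℝ)) (Y : ℕ → Ω → ℝ) (x : Fin p → ℝ) (n : ℕ)
    (ω : Ω) : 0 ≤ fdhAux X Y x n ω := by
  induction n with
  | zero => exact le_refl 0
  | succ n ih => exact ih.trans (le_max_left _ _)

lemma fdhAux_le (X : ℕ → Ω → (Fin p → ℝ)) (Y : ℕ → Ω → ℝ) (x : Fin p → ℝ) {n : ℕ}
    {ω : Ω} {c : ℝ} (hc : 0 ≤ c) (h : ∀ i < n, X i ω ≤ x → Y i ω ≤ c) :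
    fdhAux X Y x n ω ≤ c := by
  induction n with
  | zero => exact hc
  | succ n ih =>
    refine max_le (ih (fun i hi => h i (hi.trans (Nat.lt_succ_self n)))) ?_
    split_ifs with hX
    · exact h n (Nat.lt_succ_self n) hX
    · exact hc

lemma le_fdhAux (X : ℕ → Ω → (Fin p → ℝ)) (Y : ℕ → Ω → ℝ) (x : Fin p → ℝ) {n i : ℕ}
    {ω : Ω} (hi : i < n) (hX : X i ω ≤ x) : Y i ω ≤ fdhAux X Y x n ω := by
  induction n with
  | zero => exact absurd hi (Nat.not_lt_zero i)
  | succ n ih =>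
    rcases Nat.lt_succ_iff_lt_or_eq.mp hi with h | rfl
    · exact (ih h).trans (le_max_left _ _)
    · simp only [fdhAux, if_pos hX]
      exact le_max_right _ _

lemma fdh_eq_fdhAux (X : ℕ → Ω → (Fin p → ℝ)) (Y : ℕ → Ω → ℝ) (n : ℕ) (x : Fin p → ℝ)
    (ω : Ω) (hY : ∀ i, 0 ≤ Y i ω) : fdh X Y n x ω = fdhAux X Y x n ω := by
  refine le_antisymm (Real.sSup_le ?_ (fdhAux_nonneg X Y x n ω)) ?_
  · rintro y ⟨i, hi, hX, rfl⟩
    exact le_fdhAux X Y x hi hX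
  · have h0 : 0 ≤ fdh X Y n x ω := by
      by_cases hex : ∃ i < n, X i ω ≤ x
      · obtain ⟨i, hi, hX⟩ := hex
        exact (hY i).trans (le_csSup (fdh_set_finite X Y n x ω).bddAbove ⟨i, hi, hX, rfl⟩)
      · have : {y : ℝ | ∃ i < n, X i ω ≤ x ∧ Y i ω = y} = ∅ := by
          ext y
          simp only [Set.mem_setOf_eq, Set.mem_empty_iff_false, iff_false]
          rintro ⟨i, hi, hX, -⟩
          exact hex ⟨i, hi, hX⟩
        rw [fdh, this, Real.sSup_empty]
    refine fdhAux_le X Y x h0 (fun i hi hX => ?_)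
    exact le_csSup (fdh_set_finite X Y n x ω).bddAbove ⟨i, hi, hX, rfl⟩

lemma measurable_fdhAux (X : ℕ → Ω → (Fin p → ℝ)) (Y : ℕ → Ω → ℝ) (x : Fin p → ℝ)
    (hX : ∀ i, Measurable (X i)) (hY : ∀ i, Measurable (Y i)) (n : ℕ) :
    Measurable (fdhAux X Y x n) := by
  induction n with
  | zero => exact measurable_const
  | succ n ih =>
    refine ih.max (Measurable.ite ?_ (hY n) measurable_const)
    exact (hX n) measurableSet_Iic

end MyAux


/-- Equation (2.5): moments of the FDH estimation error under the exact-power tail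
condition, with `β_x = ρ_x - (p+1)`. -/
theorem statement5
    [IsProbabilityMeasure (ℙ : Measure Ω)]
    (X : ℕ → Ω → (Fin p → ℝ)) (Y : ℕ → Ω → ℝ) (hiid : IID X Y)
    (hpos : ∀ᵐ ω ∂ℙ, (∀ i, 0 ≤ X 0 ω i) ∧ 0 ≤ Y 0 ω)
    (x : Fin p → ℝ) (hxpos : ∀ i, 0 ≤ x i) (hx : 0 < margF X x)
    (hphi : BddAbove {y : ℝ | 0 ≤ y ∧ condF X Y x y < 1})
    (ℓ ρ : ℝ) (hℓ : 0 < ℓ) (hρ : 0 < ρ) (htail : ExactPowerTail X Y x ℓ ρ)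
    (β : ℝ) (hβ : β = ρ - ((p : ℝ) + 1)) :
    ∀ k : ℕ, 1 ≤ k →
      (fun n : ℕ => (∫ ω, (phi X Y x - fdh X Y n x ω) ^ k ∂ℙ) -
          (k : ℝ) * (β + p + 1)⁻¹ * ((n : ℝ) * ℓ) ^ (-(k : ℝ) / (β + p + 1)) *
            Real.Gamma ((k : ℝ) * (β + p + 1)⁻¹))
        =o[atTop] (fun n : ℕ => (n : ℝ) ^ (-(k : ℝ) / (β + p + 1))) := by
  classical
  intro k hk
  have hk0 : k ≠ 0 := by omega
  have hkR : (0:ℝ) < (k:ℝ) := by exact_mod_cast Nat.pos_of_ne_zero hk0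
  have hρeq : β + (p:ℝ) + 1 = ρ := by rw [hβ]; ring
  simp only [hρeq]
  set φv : ℝ := phi X Y x with hφv
  have hpair : ∀ i, Measurable fun ω => (X i ω, Y i ω) := hiid.1
  have hXm : ∀ i, Measurable (X i) := fun i => measurable_fst.comp (hpair i)
  have hYm : ∀ i, Measurable (Y i) := fun i => measurable_snd.comp (hpair i)
  obtain ⟨y₀, hy₀lt, hpow⟩ := htail
  -- the joint cdf vanishes below 0
  have hjoint0 : ∀ y : ℝ, y < 0 → jointF X Y x y = 0 := by
    intro y hy
    have h0 : ℙ {ω | X 0 ω ≤ x ∧ Y 0 ω ≤ y} = 0 := by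
      refine measure_mono_null ?_ (ae_iff.mp hpos)
      intro ω hω hcon
      exact absurd hcon.2 (not_le.mpr (lt_of_le_of_lt hω.2 hy))
    simp only [jointF, h0, ENNReal.toReal_zero]
  -- the frontier is positive
  have hφpos : 0 < φv := by
    by_contra hneg
    push_neg at hneg
    set y' : ℝ := (y₀ + φv) / 2 with hy'def
    have hy'1 : y₀ ≤ y' := by rw [hy'def]; linarith
    have hy'2 : y' < φv := by rw [hy'def]; linarith
    have hy'neg : y' < 0 := lt_of_lt_of_le hy'2 hneg
    have hy₀neg : y₀ < 0 := lt_of_lt_of_le hy₀lt hneg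
    have h1 := hpow y₀ le_rfl hy₀lt
    have h2 := hpow y' hy'1 hy'2
    rw [condF, hjoint0 _ hy₀neg, zero_div, sub_zero, mul_one] at h1
    rw [condF, hjoint0 _ hy'neg, zero_div, sub_zero, mul_one] at h2
    have hlt : (φv - y') ^ ρ < (φv - y₀) ^ ρ := by
      apply Real.rpow_lt_rpow (by linarith) (by rw [hy'def]; linarith) hρ
    nlinarith
  set t₁ : ℝ := min (φv / 2) ((φv - y₀) / 2) with ht₁def
  have ht₁pos : 0 < t₁ := lt_min (by linarith) (by linarith)
  have ht₁φ : t₁ ≤ φv / 2 := min_le_left _ _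
  have ht₁y₀ : t₁ ≤ (φv - y₀) / 2 := min_le_right _ _
  have hBmeas : ∀ c : ℝ, MeasurableSet (Set.Iic x ×ˢ Set.Ioi c : Set ((Fin p → ℝ) × ℝ)) :=
    fun c => measurableSet_Iic.prod measurableSet_Ioi
  -- value of the upper-tail probability
  have hAval : ∀ c : ℝ, y₀ ≤ c → c < φv →
      (ℙ ((fun ω => (X 0 ω, Y 0 ω)) ⁻¹' (Set.Iic x ×ˢ Set.Ioi c))).toReal
        = ℓ * (φv - c) ^ ρ := by
    intro c hc1 hc2
    have hsplit : (fun ω => (X 0 ω, Y 0 ω)) ⁻¹' (Set.Iic x ×ˢ Set.Ioi c)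
        = {ω | X 0 ω ≤ x} \ {ω | X 0 ω ≤ x ∧ Y 0 ω ≤ c} := by
      ext ω
      simp only [Set.mem_preimage, Set.mem_prod, Set.mem_Iic, Set.mem_Ioi, Set.mem_diff,
        Set.mem_setOf_eq, not_and, not_le]
      exact ⟨fun ⟨h1, h2⟩ => ⟨h1, fun _ => h2⟩, fun ⟨h1, h2⟩ => ⟨h1, h2 h1⟩⟩
    have hsub : {ω | X 0 ω ≤ x ∧ Y 0 ω ≤ c} ⊆ {ω | X 0 ω ≤ x} := fun ω h => h.1
    have hm2 : MeasurableSet {ω | X 0 ω ≤ x ∧ Y 0 ω ≤ c} :=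
      (hpair 0) (measurableSet_Iic.prod measurableSet_Iic :
        MeasurableSet (Set.Iic x ×ˢ Set.Iic c))
    rw [hsplit, measure_diff hsub hm2.nullMeasurableSet (measure_ne_top _ _),
      ENNReal.toReal_sub_of_le (measure_mono hsub) (measure_ne_top _ _)]
    have hh := hpow c hc1 hc2
    rw [condF, mul_sub, mul_one, mul_div_cancel₀ _ hx.ne'] at hh
    exact hh
  set Q : ℕ → ℝ → ℝ := fun n s => (ℙ {ω | s ≤ φv - fdh X Y n x ω}).toReal with hQdef
  -- exact tail probability of the FDH error
  have hPn : ∀ n : ℕ, ∀ s : ℝ, 0 < s → s ≤ t₁ → Q n s = (1 - ℓ * s ^ ρ) ^ n := by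
    intro n s hs0 hs1
    have hc0 : (0:ℝ) ≤ φv - s := by linarith
    have hcy : y₀ ≤ φv - s := by linarith
    have hcφ : φv - s < φv := by linarith
    have hset : {ω | s ≤ φv - fdh X Y n x ω}
        = ⋂ i ∈ Finset.range n,
            (fun ω => (X i ω, Y i ω)) ⁻¹' (Set.Iic x ×ˢ Set.Ioi (φv - s))ᶜ := by
      ext ω
      simp only [Set.mem_setOf_eq, Set.mem_iInter, Finset.mem_range, Set.mem_preimage,
        Set.mem_compl_iff, Set.mem_prod, Set.mem_Iic, Set.mem_Ioi, not_and, not_lt]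
      rw [le_sub_comm, fdh_le_iff X Y n x ω hc0]
      exact ⟨fun h i hi hX => not_lt.mp (fun hY => h i hi ⟨hX, hY⟩),
        fun h i hi hand => absurd hand.2 (not_lt.mpr (h i hi hand.1))⟩
    have hcalc : ℙ {ω | s ≤ φv - fdh X Y n x ω}
        = (1 - ℙ ((fun ω => (X 0 ω, Y 0 ω)) ⁻¹' (Set.Iic x ×ˢ Set.Ioi (φv - s)))) ^ n := by
      rw [hset, hiid.2.1.measure_inter_preimage_eq_mul (Finset.range n)
        (fun i _ => (hBmeas (φv - s)).compl)]
      have hfac : ∀ i : ℕ,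
          ℙ ((fun ω => (X i ω, Y i ω)) ⁻¹' (Set.Iic x ×ˢ Set.Ioi (φv - s))ᶜ)
            = 1 - ℙ ((fun ω => (X 0 ω, Y 0 ω)) ⁻¹' (Set.Iic x ×ˢ Set.Ioi (φv - s))) := by
        intro i
        rw [Set.preimage_compl, measure_compl ((hpair i) (hBmeas (φv - s)))
          (measure_ne_top _ _), measure_univ, (hiid.2.2 i).measure_mem_eq (hBmeas (φv - s))]
      rw [Finset.prod_congr rfl (fun i _ => hfac i), Finset.prod_const, Finset.card_range]
    show (ℙ {ω | s ≤ φv - fdh X Y n x ω}).toReal = _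
    rw [hcalc, ENNReal.toReal_pow,
      ENNReal.toReal_sub_of_le prob_le_one ENNReal.one_ne_top, ENNReal.toReal_one,
      hAval (φv - s) hcy hcφ, show φv - (φv - s) = s by ring]
  have hls : ∀ s : ℝ, 0 < s → s ≤ t₁ → ℓ * s ^ ρ ≤ 1 := by
    intro s h1 h2
    have hh := hPn 1 s h1 h2
    rw [pow_one] at hh
    have h3 : (0:ℝ) ≤ 1 - ℓ * s ^ ρ := hh ▸ ENNReal.toReal_nonneg
    linarith
  -- a.e. nonnegativity of the data
  have hYae : ∀ᵐ ω ∂ℙ, ∀ i, 0 ≤ Y i ω := by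
    rw [ae_all_iff]
    intro i
    have h0 : ℙ {ω | Y 0 ω < 0} = 0 := by
      refine measure_mono_null ?_ (ae_iff.mp hpos)
      intro ω h
      simp only [Set.mem_setOf_eq] at h ⊢
      intro hc
      exact absurd hc.2 (not_le.mpr h)
    have hBm : MeasurableSet {q : (Fin p → ℝ) × ℝ | q.2 < 0} :=
      measurable_snd measurableSet_Iio
    rw [ae_iff]
    have hset : {ω | ¬ 0 ≤ Y i ω}
        = (fun ω => (X i ω, Y i ω)) ⁻¹' {q : (Fin p → ℝ) × ℝ | q.2 < 0} := by
      ext ω; simp [not_le]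
    rw [hset, (hiid.2.2 i).measure_mem_eq hBm]
    exact h0
  -- the FDH estimator does not exceed the frontier, a.s.
  have hA0 : ℙ ((fun ω => (X 0 ω, Y 0 ω)) ⁻¹' (Set.Iic x ×ˢ Set.Ioi φv)) = 0 := by
    have hle : ∀ ε : ℝ, 0 < ε →
        (ℙ ((fun ω => (X 0 ω, Y 0 ω)) ⁻¹' (Set.Iic x ×ˢ Set.Ioi φv))).toReal ≤ ε := by
      intro ε hε
      set δ : ℝ := (ε / ℓ) ^ ρ⁻¹ with hδdef
      have hδ0 : 0 < δ := Real.rpow_pos_of_pos (div_pos hε hℓ) _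
      set t : ℝ := min t₁ δ with htdef
      have ht0 : 0 < t := lt_min ht₁pos hδ0
      have htt₁ : t ≤ t₁ := min_le_left _ _
      have hmono : ℙ ((fun ω => (X 0 ω, Y 0 ω)) ⁻¹' (Set.Iic x ×ˢ Set.Ioi φv))
          ≤ ℙ ((fun ω => (X 0 ω, Y 0 ω)) ⁻¹' (Set.Iic x ×ˢ Set.Ioi (φv - t))) := by
        apply measure_mono
        apply Set.preimage_mono
        apply Set.prod_mono_right
        exact Set.Ioi_subset_Ioi (by linarith)
      have h2 := ENNReal.toReal_mono (measure_ne_top _ _) hmono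
      rw [hAval (φv - t) (by linarith) (by linarith),
        show φv - (φv - t) = t by ring] at h2
      refine h2.trans ?_
      have h3 : t ^ ρ ≤ δ ^ ρ := Real.rpow_le_rpow ht0.le (min_le_right _ _) hρ.le
      have h4 : δ ^ ρ = ε / ℓ := by
        rw [hδdef, ← Real.rpow_mul (le_of_lt (div_pos hε hℓ)), inv_mul_cancel₀ hρ.ne',
          Real.rpow_one]
      calc ℓ * t ^ ρ ≤ ℓ * (ε / ℓ) := by
            rw [← h4]; exact mul_le_mul_of_nonneg_left h3 hℓ.le
        _ = ε := by field_simp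
    have h1 : (ℙ ((fun ω => (X 0 ω, Y 0 ω)) ⁻¹' (Set.Iic x ×ˢ Set.Ioi φv))).toReal = 0 := by
      refine le_antisymm ?_ ENNReal.toReal_nonneg
      refine le_of_forall_pos_le_add (fun ε hε => ?_)
      rw [zero_add]
      exact hle ε hε
    rcases (ENNReal.toReal_eq_zero_iff _).mp h1 with h | h
    · exact h
    · exact absurd h (measure_ne_top _ _)
  have hfdh_le : ∀ n : ℕ, ∀ᵐ ω ∂ℙ, fdh X Y n x ω ≤ φv := by
    intro n
    rw [ae_iff]
    have hnull : ℙ (⋃ i ∈ Finset.range n,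
        (fun ω => (X i ω, Y i ω)) ⁻¹' (Set.Iic x ×ˢ Set.Ioi φv)) = 0 := by
      refine (measure_biUnion_null_iff (Finset.range n).countable_toSet).mpr (fun i _ => ?_)
      rw [(hiid.2.2 i).measure_mem_eq (hBmeas φv)]
      exact hA0
    refine measure_mono_null ?_ hnull
    intro ω hω
    simp only [Set.mem_setOf_eq] at hω
    by_contra hnot
    apply hω
    rw [fdh_le_iff X Y n x ω hφpos.le]
    intro i hi hand
    apply hnot
    exact Set.mem_biUnion (Finset.mem_range.mpr hi)
      (Set.mem_preimage.mpr (Set.mem_prod.mpr ⟨hand.1, hand.2⟩))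
  -- identification of fdh with its measurable version
  have hfdh_eq : ∀ n : ℕ, ∀ᵐ ω ∂ℙ, fdh X Y n x ω = fdhAux X Y x n ω := by
    intro n
    filter_upwards [hYae] with ω h
    exact fdh_eq_fdhAux X Y n x ω h
  have hZnn : ∀ n : ℕ, ∀ᵐ ω ∂ℙ, 0 ≤ φv - fdh X Y n x ω := by
    intro n
    filter_upwards [hfdh_le n] with ω h
    linarith
  have hZle : ∀ n : ℕ, ∀ᵐ ω ∂ℙ, φv - fdh X Y n x ω ≤ φv := by
    intro n
    filter_upwards [hfdh_eq n] with ω h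
    have := fdhAux_nonneg X Y x n ω
    rw [h]; linarith
  have hZmeas : ∀ n : ℕ, AEStronglyMeasurable (fun ω => (φv - fdh X Y n x ω) ^ k) ℙ := by
    intro n
    have hm : Measurable (fun ω => (φv - fdhAux X Y x n ω) ^ k) :=
      ((measurable_fdhAux X Y x hXm hYm n).const_sub φv).pow_const k
    refine hm.aestronglyMeasurable.congr ?_
    filter_upwards [hfdh_eq n] with ω h
    rw [h]
  have hZint : ∀ n : ℕ, Integrable (fun ω => (φv - fdh X Y n x ω) ^ k) ℙ := by
    intro n
    refine Integrable.mono' (integrable_const (φv ^ k)) (hZmeas n) ?_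
    filter_upwards [hZnn n, hZle n] with ω h1 h2
    rw [Real.norm_eq_abs, abs_of_nonneg (pow_nonneg h1 k)]
    exact pow_le_pow_left₀ h1 h2 k
  -- layer cake + change of variables
  have hIQ : ∀ n : ℕ, (∫ ω, (φv - fdh X Y n x ω) ^ k ∂ℙ)
      = ∫ s in Ioi (0:ℝ), ((k:ℝ) * s ^ ((k:ℝ) - 1)) * Q n s := by
    intro n
    rw [(hZint n).integral_eq_integral_meas_le
      (by filter_upwards [hZnn n] with ω h using pow_nonneg h k)]
    rw [← integral_comp_rpow_Ioi_of_pos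
      (g := fun t => (ℙ : Measure Ω).real {ω | t ≤ (φv - fdh X Y n x ω) ^ k}) hkR]
    refine setIntegral_congr_fun measurableSet_Ioi (fun s hs => ?_)
    have hs0 : (0:ℝ) < s := hs
    rw [smul_eq_mul]
    congr 1
    show (ℙ {ω | s ^ (k:ℝ) ≤ (φv - fdh X Y n x ω) ^ k}).toReal
      = (ℙ {ω | s ≤ φv - fdh X Y n x ω}).toReal
    congr 1
    apply measure_congr
    rw [Filter.eventuallyEq_set]
    filter_upwards [hZnn n] with ω hω
    change s ^ (k:ℝ) ≤ (φv - fdh X Y n x ω) ^ k ↔ s ≤ φv - fdh X Y n x ω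
    rw [Real.rpow_natCast]
    exact pow_le_pow_iff_left₀ hs0.le hω hk0
  -- rescaling identity
  have hJI : ∀ n : ℕ, 1 ≤ n →
      (∫ u in Ioi (0:ℝ), ((k:ℝ) * u ^ ((k:ℝ) - 1)) * Q n ((n:ℝ) ^ (-ρ⁻¹) * u))
        = (n:ℝ) ^ ((k:ℝ)/ρ) * ∫ ω, (φv - fdh X Y n x ω) ^ k ∂ℙ := by
    intro n hn
    have hnpos : (0:ℝ) < (n:ℝ) := by exact_mod_cast hn
    set a : ℝ := (n:ℝ) ^ (-ρ⁻¹) with hadef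
    have hapos : 0 < a := Real.rpow_pos_of_pos hnpos _
    have hcomp := integral_comp_mul_left_Ioi
      (fun s => ((k:ℝ) * s ^ ((k:ℝ) - 1)) * Q n s) 0 hapos
    rw [mul_zero] at hcomp
    have hL : ∫ u in Ioi (0:ℝ), ((k:ℝ) * (a * u) ^ ((k:ℝ) - 1)) * Q n (a * u)
        = a ^ ((k:ℝ) - 1) * ∫ u in Ioi (0:ℝ), ((k:ℝ) * u ^ ((k:ℝ) - 1)) * Q n (a * u) := by
      rw [← integral_const_mul]
      refine setIntegral_congr_fun measurableSet_Ioi (fun u hu => ?_)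
      rw [Real.mul_rpow hapos.le (le_of_lt hu)]
      ring
    rw [hL, smul_eq_mul] at hcomp
    have hIan : ∫ s in Ioi (0:ℝ), ((k:ℝ) * s ^ ((k:ℝ) - 1)) * Q n s
        = ∫ ω, (φv - fdh X Y n x ω) ^ k ∂ℙ := (hIQ n).symm
    rw [hIan] at hcomp
    have hane : a ^ ((k:ℝ) - 1) ≠ 0 := ne_of_gt (Real.rpow_pos_of_pos hapos _)
    have hsolve : (∫ u in Ioi (0:ℝ), ((k:ℝ) * u ^ ((k:ℝ) - 1)) * Q n (a * u))
        = (a ^ ((k:ℝ) - 1))⁻¹ * (a⁻¹ * ∫ ω, (φv - fdh X Y n x ω) ^ k ∂ℙ) := by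
      rw [← hcomp, inv_mul_cancel_left₀ hane]
    rw [hsolve, ← mul_assoc]
    congr 1
    have h1 : (a ^ ((k:ℝ) - 1))⁻¹ * a⁻¹ = a ^ (-((k:ℝ) - 1)) * a ^ (-1 : ℝ) := by
      rw [Real.rpow_neg hapos.le, Real.rpow_neg_one]
    have h2 : a ^ (-((k:ℝ) - 1)) * a ^ (-1 : ℝ) = a ^ (-(k:ℝ)) := by
      rw [← Real.rpow_add hapos]; congr 1; ring
    have h3 : a ^ (-(k:ℝ)) = (n:ℝ) ^ ((k:ℝ)/ρ) := by
      rw [hadef, ← Real.rpow_mul hnpos.le]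
      congr 1
      rw [div_eq_mul_inv]; ring
    rw [h1, h2, h3]
  -- antitonicity and vanishing of the tail probability
  have hQanti : ∀ n : ℕ, Antitone (Q n) := by
    intro n u v huv
    exact ENNReal.toReal_mono (measure_ne_top _ _)
      (measure_mono (fun ω h => le_trans huv h))
  have hQnonneg : ∀ n : ℕ, ∀ s : ℝ, 0 ≤ Q n s := fun n s => ENNReal.toReal_nonneg
  have hQ0 : ∀ n : ℕ, ∀ s : ℝ, φv < s → Q n s = 0 := by
    intro n s hs
    have hnull : ℙ {ω | s ≤ φv - fdh X Y n x ω} = 0 := by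
      have h1 : ℙ {ω | fdh X Y n x ω ≠ fdhAux X Y x n ω} = 0 := ae_iff.mp (hfdh_eq n)
      refine measure_mono_null ?_ h1
      intro ω h
      simp only [Set.mem_setOf_eq] at h ⊢
      intro heq
      have h2 := fdhAux_nonneg X Y x n ω
      rw [← heq] at h2
      linarith
    show (ℙ {ω | s ≤ φv - fdh X Y n x ω}).toReal = 0
    rw [hnull, ENNReal.toReal_zero]
  -- constants
  set c₀ : ℝ := ℓ * (t₁ / φv) ^ ρ with hc₀def
  have hc₀pos : 0 < c₀ := mul_pos hℓ (Real.rpow_pos_of_pos (div_pos ht₁pos hφpos) _)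
  have hc₀ℓ : c₀ ≤ ℓ := by
    have h1 : (t₁ / φv) ^ ρ ≤ 1 :=
      Real.rpow_le_one (le_of_lt (div_pos ht₁pos hφpos))
        (by rw [div_le_one hφpos]; linarith) hρ.le
    nlinarith
  -- rpow scaling identities
  have hscale : ∀ n : ℕ, 1 ≤ n → ∀ u : ℝ, 0 < u →
      ℓ * ((n:ℝ) ^ (-ρ⁻¹) * u) ^ ρ = ℓ * u ^ ρ / n := by
    intro n hn u hu
    have hnpos : (0:ℝ) < (n:ℝ) := by exact_mod_cast hn
    have han : (0:ℝ) < (n:ℝ) ^ (-ρ⁻¹) := Real.rpow_pos_of_pos hnpos _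
    rw [Real.mul_rpow han.le hu.le]
    have h1 : ((n:ℝ) ^ (-ρ⁻¹)) ^ ρ = (n:ℝ)⁻¹ := by
      rw [← Real.rpow_mul hnpos.le]
      rw [show -ρ⁻¹ * ρ = -1 by field_simp, Real.rpow_neg_one]
    rw [h1]; ring
  -- the domination bound
  have hQb : ∀ n : ℕ, 1 ≤ n → ∀ u : ℝ, 0 < u →
      Q n ((n:ℝ) ^ (-ρ⁻¹) * u) ≤ Real.exp (-(c₀ * u ^ ρ)) := by
    intro n hn u hu
    have hnpos : (0:ℝ) < (n:ℝ) := by exact_mod_cast hn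
    have han : (0:ℝ) < (n:ℝ) ^ (-ρ⁻¹) := Real.rpow_pos_of_pos hnpos _
    have hanu : 0 < (n:ℝ) ^ (-ρ⁻¹) * u := mul_pos han hu
    have huρ : (0:ℝ) ≤ u ^ ρ := Real.rpow_nonneg hu.le _
    rcases le_or_gt ((n:ℝ) ^ (-ρ⁻¹) * u) t₁ with hle | hgt
    · rw [hPn n _ hanu hle]
      refine le_trans (one_sub_pow_le_exp (hls _ hanu hle) n) ?_
      rw [Real.exp_le_exp, hscale n hn u hu]
      have h2 : (n:ℝ) * (ℓ * u ^ ρ / n) = ℓ * u ^ ρ := by field_simp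
      rw [h2]
      have h3 : c₀ * u ^ ρ ≤ ℓ * u ^ ρ := mul_le_mul_of_nonneg_right hc₀ℓ huρ
      linarith
    · rcases le_or_gt u (φv * (n:ℝ) ^ (ρ⁻¹:ℝ)) with hu2 | hu2
      · have h1 : Q n ((n:ℝ) ^ (-ρ⁻¹) * u) ≤ Q n t₁ := hQanti n hgt.le
        rw [hPn n t₁ ht₁pos le_rfl] at h1
        refine (h1.trans (one_sub_pow_le_exp (hls t₁ ht₁pos le_rfl) n)).trans ?_
        rw [Real.exp_le_exp]
        have hnρ : ((n:ℝ) ^ (ρ⁻¹:ℝ)) ^ ρ = (n:ℝ) := by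
          rw [← Real.rpow_mul hnpos.le, inv_mul_cancel₀ hρ.ne', Real.rpow_one]
        have hu3 : u ^ ρ ≤ φv ^ ρ * n := by
          calc u ^ ρ ≤ (φv * (n:ℝ) ^ (ρ⁻¹:ℝ)) ^ ρ := Real.rpow_le_rpow hu.le hu2 hρ.le
            _ = φv ^ ρ * n := by
              rw [Real.mul_rpow hφpos.le (Real.rpow_nonneg hnpos.le _), hnρ]
        have hexpand : c₀ * (φv ^ ρ * n) = (n:ℝ) * (ℓ * t₁ ^ ρ) := by
          rw [hc₀def, Real.div_rpow ht₁pos.le hφpos.le]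
          have hφρ : (0:ℝ) < φv ^ ρ := Real.rpow_pos_of_pos hφpos _
          field_simp
        have h4 : c₀ * u ^ ρ ≤ (n:ℝ) * (ℓ * t₁ ^ ρ) := by
          calc c₀ * u ^ ρ ≤ c₀ * (φv ^ ρ * n) := mul_le_mul_of_nonneg_left hu3 hc₀pos.le
            _ = (n:ℝ) * (ℓ * t₁ ^ ρ) := hexpand
        linarith
      · have hφlt : φv < (n:ℝ) ^ (-ρ⁻¹) * u := by
          have hcancel : (n:ℝ) ^ (-ρ⁻¹) * ((n:ℝ) ^ (ρ⁻¹:ℝ)) = 1 := by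
            rw [← Real.rpow_add hnpos, neg_add_cancel, Real.rpow_zero]
          calc φv = (n:ℝ) ^ (-ρ⁻¹) * (φv * (n:ℝ) ^ (ρ⁻¹:ℝ)) := by
                rw [show (n:ℝ) ^ (-ρ⁻¹) * (φv * (n:ℝ) ^ (ρ⁻¹:ℝ))
                    = φv * ((n:ℝ) ^ (-ρ⁻¹) * ((n:ℝ) ^ (ρ⁻¹:ℝ))) by ring, hcancel, mul_one]
            _ < (n:ℝ) ^ (-ρ⁻¹) * u := by
                exact mul_lt_mul_of_pos_left hu2 han
        rw [hQ0 n _ hφlt]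
        positivity
  -- pointwise limit
  have hlim : ∀ u : ℝ, 0 < u →
      Tendsto (fun m : ℕ => ((k:ℝ) * u ^ ((k:ℝ) - 1)) * Q (m+1) (((m+1:ℕ):ℝ) ^ (-ρ⁻¹) * u))
        atTop (𝓝 (((k:ℝ) * u ^ ((k:ℝ) - 1)) * Real.exp (-(ℓ * u ^ ρ)))) := by
    intro u hu
    refine Tendsto.const_mul _ ?_
    have hbase : Tendsto (fun m : ℕ => (1 + (-(ℓ * u ^ ρ)) / (m:ℝ)) ^ m) atTop
        (𝓝 (Real.exp (-(ℓ * u ^ ρ)))) := Real.tendsto_one_add_div_pow_exp _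
    have hshift := hbase.comp (tendsto_add_atTop_nat 1)
    refine hshift.congr' ?_
    have hev : ∀ᶠ m : ℕ in atTop, (u / t₁) ^ ρ ≤ ((m:ℝ) + 1) := by
      filter_upwards [eventually_ge_atTop ⌈(u / t₁) ^ ρ⌉₊] with m hm
      calc (u / t₁) ^ ρ ≤ (⌈(u / t₁) ^ ρ⌉₊ : ℝ) := Nat.le_ceil _
        _ ≤ (m:ℝ) := by exact_mod_cast hm
        _ ≤ (m:ℝ) + 1 := by linarith
    filter_upwards [hev] with m hm
    have hm1pos : (0:ℝ) < ((m+1:ℕ):ℝ) := by positivity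
    have hsle : ((m+1:ℕ):ℝ) ^ (-ρ⁻¹) * u ≤ t₁ := by
      have h1 : u / t₁ ≤ ((m:ℝ) + 1) ^ (ρ⁻¹:ℝ) := by
        have h2 : ((u / t₁) ^ ρ) ^ (ρ⁻¹:ℝ) ≤ ((m:ℝ) + 1) ^ (ρ⁻¹:ℝ) :=
          Real.rpow_le_rpow (Real.rpow_nonneg (le_of_lt (div_pos hu ht₁pos)) _) hm
            (inv_nonneg.mpr hρ.le)
        rwa [← Real.rpow_mul (le_of_lt (div_pos hu ht₁pos)), mul_inv_cancel₀ hρ.ne',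
          Real.rpow_one] at h2
      have h3 : u ≤ t₁ * ((m:ℝ) + 1) ^ (ρ⁻¹:ℝ) := by
        rw [div_le_iff₀ ht₁pos] at h1
        linarith [h1]
      have hmc : ((m+1:ℕ):ℝ) = (m:ℝ) + 1 := by push_cast; ring
      have h4 : ((m:ℝ) + 1) ^ (-ρ⁻¹) * ((m:ℝ) + 1) ^ (ρ⁻¹:ℝ) = 1 := by
        rw [← Real.rpow_add (by positivity), neg_add_cancel, Real.rpow_zero]
      calc ((m+1:ℕ):ℝ) ^ (-ρ⁻¹) * u ≤ ((m+1:ℕ):ℝ) ^ (-ρ⁻¹) * (t₁ * ((m:ℝ) + 1) ^ (ρ⁻¹:ℝ)) := by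
            refine mul_le_mul_of_nonneg_left h3 ?_
            exact (Real.rpow_pos_of_pos hm1pos _).le
        _ = t₁ := by
            rw [hmc, show ((m:ℝ) + 1) ^ (-ρ⁻¹) * (t₁ * ((m:ℝ) + 1) ^ (ρ⁻¹:ℝ))
              = t₁ * (((m:ℝ) + 1) ^ (-ρ⁻¹) * ((m:ℝ) + 1) ^ (ρ⁻¹:ℝ)) by ring, h4, mul_one]
    have hanu : 0 < ((m+1:ℕ):ℝ) ^ (-ρ⁻¹) * u := mul_pos (Real.rpow_pos_of_pos hm1pos _) hu
    show (1 + -(ℓ * u ^ ρ) / ((m+1:ℕ):ℝ)) ^ (m+1) = Q (m+1) (((m+1:ℕ):ℝ) ^ (-ρ⁻¹) * u)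
    rw [hPn (m+1) _ hanu hsle, hscale (m+1) (Nat.le_add_left 1 m) u hu]
    congr 1
    push_cast
    ring
  -- dominated convergence
  have hDCT : Tendsto (fun m : ℕ =>
      ∫ u in Ioi (0:ℝ), ((k:ℝ) * u ^ ((k:ℝ) - 1)) * Q (m+1) (((m+1:ℕ):ℝ) ^ (-ρ⁻¹) * u))
      atTop (𝓝 (∫ u in Ioi (0:ℝ), ((k:ℝ) * u ^ ((k:ℝ) - 1)) * Real.exp (-(ℓ * u ^ ρ)))) := by
    refine tendsto_integral_of_dominated_convergence
      (fun u => (k:ℝ) * (u ^ ((k:ℝ) - 1) * Real.exp (-(c₀ * u ^ ρ)))) ?_ ?_ ?_ ?_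
    · intro m
      refine Measurable.aestronglyMeasurable ?_
      have h1 : Measurable fun u : ℝ => (k:ℝ) * u ^ ((k:ℝ) - 1) :=
        measurable_const.mul (measurable_rpow_const _)
      have h2 : Antitone fun u : ℝ => Q (m+1) (((m+1:ℕ):ℝ) ^ (-ρ⁻¹) * u) := by
        intro u v huv
        exact hQanti (m+1) (mul_le_mul_of_nonneg_left huv
          (Real.rpow_nonneg (Nat.cast_nonneg _) _))
      exact h1.mul h2.measurable
    · exact (aux_integrableOn (by linarith : (-1:ℝ) < (k:ℝ) - 1) hρ hc₀pos).const_mul _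
    · intro m
      rw [ae_restrict_iff' measurableSet_Ioi]
      refine Eventually.of_forall (fun u hu => ?_)
      have hu0 : (0:ℝ) < u := hu
      have hQn : 0 ≤ Q (m+1) (((m+1:ℕ):ℝ) ^ (-ρ⁻¹) * u) := hQnonneg _ _
      have hue : (0:ℝ) ≤ u ^ ((k:ℝ) - 1) := Real.rpow_nonneg hu0.le _
      rw [Real.norm_eq_abs, abs_of_nonneg (by positivity)]
      rw [mul_assoc]
      refine mul_le_mul_of_nonneg_left ?_ hkR.le
      exact mul_le_mul_of_nonneg_left (hQb (m+1) (Nat.le_add_left 1 m) u hu0) hue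
    · rw [ae_restrict_iff' measurableSet_Ioi]
      exact Eventually.of_forall (fun u hu => hlim u hu)
  -- value of the limit integral
  set L : ℝ := (k:ℝ) * (ℓ ^ (-(k:ℝ)/ρ) * (1/ρ) * Real.Gamma ((k:ℝ)/ρ)) with hLdef
  have hval : (∫ u in Ioi (0:ℝ), ((k:ℝ) * u ^ ((k:ℝ) - 1)) * Real.exp (-(ℓ * u ^ ρ))) = L := by
    rw [show (fun u : ℝ => ((k:ℝ) * u ^ ((k:ℝ) - 1)) * Real.exp (-(ℓ * u ^ ρ)))
        = fun u : ℝ => (k:ℝ) * (u ^ ((k:ℝ) - 1) * Real.exp (-(ℓ * u ^ ρ))) by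
      funext u; ring]
    rw [integral_const_mul, aux_integral_value (by linarith : (-1:ℝ) < (k:ℝ) - 1) hρ hℓ]
    rw [hLdef]
    norm_num
  rw [hval] at hDCT
  -- conclusion
  have hJten : Tendsto (fun n : ℕ =>
      (n:ℝ) ^ ((k:ℝ)/ρ) * ∫ ω, (φv - fdh X Y n x ω) ^ k ∂ℙ) atTop (𝓝 L) := by
    rw [← tendsto_add_atTop_iff_nat 1]
    exact hDCT.congr (fun m => hJI (m+1) (Nat.le_add_left 1 m))
  have hfinal : Tendsto (fun n : ℕ =>
      (n:ℝ) ^ ((k:ℝ)/ρ) * (∫ ω, (φv - fdh X Y n x ω) ^ k ∂ℙ) - L) atTop (𝓝 0) := by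
    have := hJten.sub_const L
    rwa [sub_self] at this
  refine (isLittleO_iff_tendsto' ?_).mpr ?_
  · filter_upwards [eventually_ge_atTop 1] with n hn h0
    have hnpos : (0:ℝ) < (n:ℝ) := by exact_mod_cast hn
    exact absurd h0 (ne_of_gt (Real.rpow_pos_of_pos hnpos _))
  · refine Tendsto.congr' ?_ hfinal
    filter_upwards [eventually_ge_atTop 1] with n hn
    have hnpos : (0:ℝ) < (n:ℝ) := by exact_mod_cast hn
    have hA1 : (n:ℝ) ^ (-(k:ℝ)/ρ) = ((n:ℝ) ^ ((k:ℝ)/ρ))⁻¹ := by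
      rw [neg_div, Real.rpow_neg hnpos.le]
    have hA0' : (n:ℝ) ^ ((k:ℝ)/ρ) ≠ 0 := ne_of_gt (Real.rpow_pos_of_pos hnpos _)
    have hmulr : ((n:ℝ) * ℓ) ^ (-(k:ℝ)/ρ) = ((n:ℝ) ^ ((k:ℝ)/ρ))⁻¹ * ℓ ^ (-(k:ℝ)/ρ) := by
      rw [Real.mul_rpow hnpos.le hℓ.le, hA1]
    rw [hA1, hmulr, hLdef,
      show (k:ℝ) * ρ⁻¹ = (k:ℝ)/ρ from (div_eq_mul_inv _ _).symm]
    field_simp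


end FrontierEV
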